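/- For a weighted simple graph on vertices {1,…,n} with symmetric nonnegative edge weights w_{ij}, define the weighted Laplacian Λ by Λ_{ij} = −w_{ij} for i ≠ j and Λ_{ii} = Σ_{k≠i} w_{ik}. Then det(M_{11}(Λ)) = Σ_τ Π_{{i,j}∈Edges(τ)} w_{ij}, summing over all trees τ on {1,…,n}. -/

import Mathlib

open scoped Classical
namespace WMT
variable {n : ℕ}

/-- The step (parent) function on `Fin (n+1)` induced by `g`. -/
def step (g : Fin n → Fin (n + 1)) : Fin (n + 1) → Fin (n + 1) := Fin.cases 0 g

@[simp] lemma step_zero (g : Fin n → Fin (n + 1)) : step g 0 = 0 := rfl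
@[simp] lemma step_succ (g : Fin n → Fin (n + 1)) (i : Fin n) : step g i.succ = g i := rfl

/-- `g` is good if every vertex reaches `0` by iterating `step g`. -/
def Good (g : Fin n → Fin (n + 1)) : Prop := ∀ v, ∃ k, (step g)^[k] v = 0

noncomputable def rk {g : Fin n → Fin (n + 1)} (hg : Good g) (v : Fin (n + 1)) : ℕ :=
  Nat.find (hg v)

lemma rk_zero {g : Fin n → Fin (n + 1)} (hg : Good g) : rk hg 0 = 0 := by
  simp [rk, Nat.find_eq_zero]

lemma rk_pos {g : Fin n → Fin (n + 1)} (hg : Good g) {v : Fin (n + 1)} (hv : v ≠ 0) :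
    0 < rk hg v := by
  rcases Nat.eq_zero_or_pos (rk hg v) with h | h
  · exact absurd (by simpa using Nat.find_eq_zero (hg v) |>.mp h) hv
  · exact h

lemma rk_step {g : Fin n → Fin (n + 1)} (hg : Good g) {v : Fin (n + 1)} (hv : v ≠ 0) :
    rk hg (step g v) + 1 = rk hg v := by
  have h1 : (step g)^[rk hg v] v = 0 := Nat.find_spec (hg v)
  have hpos := rk_pos hg hv
  obtain ⟨m, hm⟩ : ∃ m, rk hg v = m + 1 := ⟨rk hg v - 1, by omega⟩
  have h2 : (step g)^[m] (step g v) = 0 := by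
    rw [← Function.iterate_succ_apply]; rw [hm] at h1; exact h1
  have hle : rk hg (step g v) ≤ m := Nat.find_le (h := hg (step g v)) h2
  have h3 : (step g)^[rk hg (step g v) + 1] v = 0 := by
    rw [Function.iterate_succ_apply]; exact Nat.find_spec (hg (step g v))
  have hge : rk hg v ≤ rk hg (step g v) + 1 := Nat.find_le (h := hg v) h3
  omega

lemma rk_step_lt {g : Fin n → Fin (n + 1)} (hg : Good g) {v : Fin (n + 1)} (hv : v ≠ 0) :
    rk hg (step g v) < rk hg v := by have := rk_step hg hv; omega

lemma good_ne {g : Fin n → Fin (n + 1)} (hg : Good g) (i : Fin n) : g i ≠ i.succ := by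
  intro h
  have : step g i.succ = i.succ := by simp [h]
  have h2 := rk_step_lt hg (Fin.succ_ne_zero i)
  rw [this] at h2
  omega


/-- The 0/1 "identity minus functional digraph" matrix of `g`. -/
noncomputable def RMat (g : Fin n → Fin (n + 1)) : Matrix (Fin n) (Fin n) ℝ :=
  Matrix.of fun i j => (if i = j then (1:ℝ) else 0) - (if g i = j.succ then 1 else 0)

lemma det_expand (w : Fin (n + 1) → Fin (n + 1) → ℝ)
    (Λ : Matrix (Fin (n + 1)) (Fin (n + 1)) ℝ)
    (hΛ : ∀ i j, Λ i j =
      if i = j then ∑ k ∈ Finset.univ.filter (fun k => k ≠ i), w i k else -w i j) :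
    (Λ.submatrix (Fin.succAbove 0) (Fin.succAbove 0)).det =
      ∑ g ∈ Fintype.piFinset (fun i : Fin n => Finset.univ.filter (fun k => k ≠ i.succ)),
        (∏ i, w i.succ (g i)) * (RMat g).det := by
  classical
  set M := Λ.submatrix (Fin.succAbove 0) (Fin.succAbove 0) with hM
  have hrow : ∀ i : Fin n, M i = ∑ k ∈ Finset.univ.filter (fun k => k ≠ i.succ),
      w i.succ k • (fun j : Fin n =>
        (if i = j then (1:ℝ) else 0) - (if k = j.succ then 1 else 0)) := by
    intro i
    funext j
    have hsum : ∀ f : Fin (n+1) → (Fin n → ℝ),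
        (∑ k ∈ Finset.univ.filter (fun k => k ≠ i.succ), w i.succ k • f k) j
        = ∑ k ∈ Finset.univ.filter (fun k => k ≠ i.succ), w i.succ k * f k j := by
      intro f; simp [Finset.sum_apply]
    rw [hsum]
    have hM2 : M i j = Λ i.succ j.succ := by simp [hM, Fin.succAbove_zero]
    have key : ∑ k ∈ Finset.univ.filter (fun k => k ≠ i.succ),
        w i.succ k * ((if i = j then (1:ℝ) else 0) - (if k = j.succ then 1 else 0))
        = (if i = j then ∑ k ∈ Finset.univ.filter (fun k => k ≠ i.succ), w i.succ k else 0)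
          - (if j = i then 0 else w i.succ j.succ) := by
      simp only [mul_sub]
      rw [Finset.sum_sub_distrib]
      congr 1
      · by_cases h : i = j <;> simp [h]
      · have : ∀ k ∈ Finset.univ.filter (fun k => k ≠ i.succ),
            w i.succ k * (if k = j.succ then (1:ℝ) else 0)
            = if k = j.succ then w i.succ k else 0 := by
          intro k _; by_cases h : k = j.succ <;> simp [h]
        rw [Finset.sum_congr rfl this, Finset.sum_ite_eq' _ (j.succ)]
        by_cases h : j = i
        · subst h; simp
        · have : j.succ ∈ Finset.univ.filter (fun k => k ≠ i.succ) := by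
            simp [Fin.succ_inj.ne.mpr h]
          simp [this, h]
    rw [key, hM2, hΛ]
    by_cases h : i = j
    · subst h; simp
    · have : i.succ ≠ j.succ := Fin.succ_inj.ne.mpr h
      simp [this, Ne.symm h, h]
  -- multilinear expansion
  have hdet : M.det = (Matrix.detRowAlternating : (Fin n → ℝ) [⋀^Fin n]→ₗ[ℝ] ℝ) M := rfl
  rw [hdet]
  have : (M : Matrix (Fin n) (Fin n) ℝ) = fun i => ∑ k ∈ Finset.univ.filter (fun k => k ≠ i.succ),
      w i.succ k • (fun j : Fin n =>
        (if i = j then (1:ℝ) else 0) - (if k = j.succ then 1 else 0)) := by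
    funext i; exact hrow i
  have expand := MultilinearMap.map_sum_finset
    (f := (Matrix.detRowAlternating : (Fin n → ℝ) [⋀^Fin n]→ₗ[ℝ] ℝ).toMultilinearMap)
    (g := fun i k => w i.succ k • (fun j : Fin n =>
      (if i = j then (1:ℝ) else 0) - (if k = j.succ then 1 else 0)))
    (A := fun i => Finset.univ.filter (fun k => k ≠ i.succ))
  rw [AlternatingMap.coe_multilinearMap] at expand
  rw [this, expand]
  apply Finset.sum_congr rfl
  intro g hg
  have hsmul := MultilinearMap.map_smul_univ
    (f := (Matrix.detRowAlternating : (Fin n → ℝ) [⋀^Fin n]→ₗ[ℝ] ℝ).toMultilinearMap)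
    (c := fun i => w i.succ (g i))
    (m := fun i => (fun j : Fin n =>
      (if i = j then (1:ℝ) else 0) - (if g i = j.succ then 1 else 0)))
  rw [AlternatingMap.coe_multilinearMap] at hsmul
  rw [hsmul]
  simp only [smul_eq_mul]
  rfl


lemma det_RMat_good {g : Fin n → Fin (n + 1)} (hg : Good g) : (RMat g).det = 1 := by
  classical
  set ρ : Fin n → ℕ := fun i => rk hg i.succ with hρ
  set σ := Tuple.sort ρ with hσ
  have hmono : Monotone (ρ ∘ σ) := Tuple.monotone_sort ρ
  rw [← Matrix.det_submatrix_equiv_self (σ : Equiv.Perm (Fin n)) (RMat g)]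
  have htri : ((RMat g).submatrix σ σ).BlockTriangular OrderDual.toDual := by
    intro i j hij
    have hij' : (i : Fin n) < j := hij
    have hle : ρ (σ i) ≤ ρ (σ j) := hmono (le_of_lt hij')
    have hne : σ i ≠ σ j := fun h => absurd (σ.injective h) (ne_of_lt hij')
    have hg2 : g (σ i) ≠ (σ j).succ := by
      intro h
      have hs : step g (σ i).succ = (σ j).succ := by simp [h]
      have := rk_step hg (Fin.succ_ne_zero (σ i))
      rw [hs] at this
      have : ρ (σ j) + 1 = ρ (σ i) := this
      omega
    simp [Matrix.submatrix_apply, RMat, hne, hg2]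
  rw [Matrix.det_of_lowerTriangular _ htri]
  apply Finset.prod_eq_one
  intro i _
  simp [RMat, good_ne hg (σ i)]

lemma det_RMat_bad {g : Fin n → Fin (n + 1)} (hbad : ¬ Good g) : (RMat g).det = 0 := by
  classical
  set f := step g with hf
  obtain ⟨v₀, hv₀⟩ : ∃ v, ∀ k, f^[k] v ≠ 0 := by
    rw [Good] at hbad; push_neg at hbad; exact hbad
  -- find a periodic point
  obtain ⟨a, b, hlt, heq⟩ : ∃ a b : Fin (n + 2), (a:ℕ) < (b:ℕ) ∧ f^[(a:ℕ)] v₀ = f^[(b:ℕ)] v₀ := by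
    have hni : ¬ Function.Injective (fun k : Fin (n + 2) => f^[(k:ℕ)] v₀) := by
      intro hinj
      have := Fintype.card_le_of_injective _ hinj
      simp at this
    rw [Function.not_injective_iff] at hni
    obtain ⟨a, b, h1, h2⟩ := hni
    rcases h2.lt_or_gt with h | h
    · exact ⟨a, b, h, h1⟩
    · exact ⟨b, a, h, h1.symm⟩
  set u := f^[(a:ℕ)] v₀ with hu
  set p := (b:ℕ) - (a:ℕ) with hp
  have hppos : 0 < p := by omega
  have hfix : f^[p] u = u := by
    rw [hu, ← Function.iterate_add_apply, show p + (a:ℕ) = (b:ℕ) by omega]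
    exact heq.symm
  set S : Finset (Fin (n + 1)) := Finset.univ.filter (fun x => ∃ m, f^[m] u = x) with hS
  have huS : u ∈ S := by simp [hS]; exact ⟨0, rfl⟩
  have hS0 : ∀ x ∈ S, x ≠ 0 := by
    intro x hx
    simp only [hS, Finset.mem_filter] at hx
    obtain ⟨-, m, hm⟩ := hx
    rw [hu, ← Function.iterate_add_apply] at hm
    exact hm ▸ hv₀ (m + a)
  have hfS : ∀ x ∈ S, f x ∈ S := by
    intro x hx
    simp only [hS, Finset.mem_filter] at hx ⊢
    obtain ⟨-, m, hm⟩ := hx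
    exact ⟨Finset.mem_univ _, m + 1, by rw [Function.iterate_succ_apply', hm]⟩
  have hfixS : ∀ x ∈ S, f^[p] x = x := by
    intro x hx
    simp only [hS, Finset.mem_filter] at hx
    obtain ⟨-, m, hm⟩ := hx
    rw [← hm, ← Function.iterate_add_apply, Nat.add_comm p m, Function.iterate_add_apply, hfix]
  have hinjS : Set.InjOn f S := by
    intro x hx y hy hxy
    obtain ⟨q, hq⟩ : ∃ q, p = q + 1 := ⟨p - 1, by omega⟩
    have h2 : f^[p] x = f^[p] y := by
      rw [hq, Function.iterate_succ_apply, Function.iterate_succ_apply, hxy]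
    rwa [hfixS x (Finset.mem_coe.mp hx), hfixS y (Finset.mem_coe.mp hy)] at h2
  have himg : S.image f = S := by
    apply Finset.eq_of_subset_of_card_le
    · intro y hy
      simp only [Finset.mem_image] at hy
      obtain ⟨x, hx, rfl⟩ := hy
      exact hfS x hx
    · rw [Finset.card_image_of_injOn hinjS]
  -- the dependent rows vector
  set vv : Fin n → ℝ := fun i => if i.succ ∈ S then 1 else 0 with hvv
  have hvv0 : vv ≠ 0 := by
    obtain ⟨j, hj⟩ := Fin.exists_succ_eq_of_ne_zero (hS0 u huS)
    intro h
    have : vv j = 0 := by rw [h]; rfl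
    rw [hvv] at this
    simp only [hj] at this
    rw [if_pos huS] at this
    norm_num at this
  have hmul : Matrix.vecMul vv (RMat g) = 0 := by
    funext j
    have expand : Matrix.vecMul vv (RMat g) j
        = ∑ i : Fin n, (if i.succ ∈ S then (1:ℝ) else 0) *
            ((if i = j then (1:ℝ) else 0) - (if g i = j.succ then 1 else 0)) := by
      simp [Matrix.vecMul, dotProduct, hvv, RMat]
    rw [expand]
    have e1 : ∑ i : Fin n, (if i.succ ∈ S then (1:ℝ) else 0) *
            ((if i = j then (1:ℝ) else 0) - (if g i = j.succ then 1 else 0))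
        = (∑ i : Fin n, (if i.succ ∈ S then (1:ℝ) else 0) * (if i = j then (1:ℝ) else 0))
          - ∑ i : Fin n, (if i.succ ∈ S then (1:ℝ) else 0) * (if g i = j.succ then 1 else 0) := by
      rw [← Finset.sum_sub_distrib]; congr 1; funext i; ring
    rw [e1]
    have e2 : (∑ i : Fin n, (if i.succ ∈ S then (1:ℝ) else 0) * (if i = j then (1:ℝ) else 0))
        = (if j.succ ∈ S then (1:ℝ) else 0) := by
      rw [Finset.sum_eq_single j]
      · by_cases h : j.succ ∈ S <;> simp [h]
      · intro i _ hne; simp [hne]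
      · intro h; exact absurd (Finset.mem_univ j) h
    have e3 : (∑ i : Fin n, (if i.succ ∈ S then (1:ℝ) else 0) * (if g i = j.succ then 1 else 0))
        = (if j.succ ∈ S then (1:ℝ) else 0) := by
      have lift : ∀ i : Fin n, (if i.succ ∈ S then (1:ℝ) else 0) * (if g i = j.succ then 1 else 0)
          = (fun x : Fin (n+1) => (if x ∈ S then (1:ℝ) else 0) * (if f x = j.succ then 1 else 0)) i.succ := by
        intro i; simp [hf]
      rw [Finset.sum_congr rfl (fun i _ => lift i)]
      have e4 : ∑ i : Fin n, (fun x : Fin (n+1) => (if x ∈ S then (1:ℝ) else 0) * (if f x = j.succ then 1 else 0)) i.succ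
          = ∑ x : Fin (n+1), (if x ∈ S then (1:ℝ) else 0) * (if f x = j.succ then 1 else 0) := by
        rw [Fin.sum_univ_succ]
        have : (0 : Fin (n+1)) ∉ S := fun h => hS0 0 h rfl
        simp [this]
      rw [e4]
      have e5 : ∑ x : Fin (n+1), (if x ∈ S then (1:ℝ) else 0) * (if f x = j.succ then 1 else 0)
          = ∑ x ∈ S, (if f x = j.succ then (1:ℝ) else 0) := by
        have hpt : ∀ x : Fin (n+1), (if x ∈ S then (1:ℝ) else 0) * (if f x = j.succ then 1 else 0)
            = if x ∈ S then (if f x = j.succ then (1:ℝ) else 0) else 0 := by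
          intro x; by_cases h : x ∈ S <;> simp [h]
        rw [Finset.sum_congr rfl (fun x _ => hpt x), Finset.sum_ite_mem, Finset.univ_inter]
      rw [e5]
      by_cases hjS : j.succ ∈ S
      · have : j.succ ∈ S.image f := himg.symm ▸ hjS
        obtain ⟨x₀, hx₀S, hx₀⟩ := Finset.mem_image.mp this
        rw [Finset.sum_eq_single x₀]
        · simp [hx₀, hjS]
        · intro x hxS hxne
          have : f x ≠ j.succ := by
            intro h
            exact hxne (hinjS hxS hx₀S (h.trans hx₀.symm))
          simp [this]
        · intro h; exact absurd hx₀S h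
      · rw [if_neg hjS]
        apply Finset.sum_eq_zero
        intro x hx
        have : f x ≠ j.succ := by
          intro h
          exact hjS (h ▸ hfS x hx)
        simp [this]
    rw [e2, e3]
    simp
  by_contra hdet
  exact hvv0 (Matrix.eq_zero_of_vecMul_eq_zero hdet hmul)


/-- The undirected graph of the functional digraph of `g`. -/
def TG (g : Fin n → Fin (n + 1)) : SimpleGraph (Fin (n + 1)) :=
  SimpleGraph.fromRel (fun u v => step g u = v)

lemma TG_adj {g : Fin n → Fin (n + 1)} {u v : Fin (n + 1)} :
    (TG g).Adj u v ↔ u ≠ v ∧ (step g u = v ∨ step g v = u) :=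
  SimpleGraph.fromRel_adj _ u v

lemma adj_step {g : Fin n → Fin (n + 1)} (hg : Good g) {v : Fin (n + 1)} (hv : v ≠ 0) :
    (TG g).Adj v (step g v) := by
  rw [TG_adj]
  refine ⟨?_, Or.inl rfl⟩
  intro h
  have := rk_step_lt hg hv
  rw [← h] at this
  omega

lemma step_eq_of_adj {g : Fin n → Fin (n + 1)} (hg : Good g) {u x : Fin (n + 1)}
    (hrk : rk hg x ≤ rk hg u) (hadj : (TG g).Adj u x) : step g u = x := by
  rw [TG_adj] at hadj
  obtain ⟨hne, h | h⟩ := hadj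
  · exact h
  · exfalso
    have hx0 : x ≠ 0 := by
      intro h0
      have hu0 : u = 0 := by rw [h0] at h; simpa using h.symm
      exact hne (by rw [hu0, h0])
    have := rk_step_lt hg hx0
    rw [h] at this
    omega

lemma reachable_zero {g : Fin n → Fin (n + 1)} (hg : Good g) (v : Fin (n + 1)) :
    (TG g).Reachable v 0 := by
  obtain ⟨k, hk⟩ := hg v
  induction k generalizing v with
  | zero => rw [Function.iterate_zero_apply] at hk; rw [hk]
  | succ k ih =>
    by_cases hv : v = 0
    · rw [hv]
    · have hadj := adj_step hg hv
      exact hadj.reachable.trans (ih (step g v) (by rwa [← Function.iterate_succ_apply]))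

lemma head_ne_getLast_of_nodup {α : Type*} {l : List α} (hnodup : l.Nodup)
    (hlen : 2 ≤ l.length) (h1 : l ≠ []) : l.head h1 ≠ l.getLast h1 := by
  match l, hnodup with
  | a :: t, hnodup =>
    have ht : t ≠ [] := by
      intro h; rw [h] at hlen; simp at hlen
    rw [List.head_cons, List.getLast_cons ht]
    intro h
    rw [List.nodup_cons] at hnodup
    exact hnodup.1 (h ▸ List.getLast_mem ht)

lemma tree_of_good {g : Fin n → Fin (n + 1)} (hg : Good g) : (TG g).IsTree := by
  constructor
  · constructor
    · intro a b
      exact (reachable_zero hg a).trans (reachable_zero hg b).symm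
  · -- acyclic
    intro v c hc
    -- pick a vertex of maximal rank on the cycle
    obtain ⟨m, hmmem, hmax⟩ := Finset.exists_max_image c.support.toFinset (rk hg)
      ⟨v, List.mem_toFinset.mpr c.start_mem_support⟩
    have hmmem' : m ∈ c.support := List.mem_toFinset.mp hmmem
    set c' := c.rotate m hmmem' with hc'def
    have hc' : c'.IsCycle := hc.rotate hmmem'
    have hlen : 3 ≤ c'.length := hc'.three_le_length
    have hsup : ∀ x ∈ c'.support, rk hg x ≤ rk hg m := by
      intro x hx
      rw [c'.support_eq_cons] at hx
      rcases List.mem_cons.mp hx with hx | hx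
      · rw [hx]
      · have hrot := c.support_rotate m hmmem'
        have : x ∈ c.support.tail := (hrot.mem_iff).mp hx
        exact hmax x (List.mem_toFinset.mpr (List.mem_of_mem_tail this))
    have hnn : ¬ c'.Nil := by
      rw [SimpleGraph.Walk.not_nil_iff_lt_length]; omega
    obtain ⟨x, hadj, q, hq⟩ := SimpleGraph.Walk.not_nil_iff.mp hnn
    have hxsup : x ∈ c'.support := by
      rw [hq]; exact List.mem_cons_of_mem _ q.start_mem_support
    have hxd : step g m = x := step_eq_of_adj hg (hsup x hxsup) hadj
    -- last dart
    have hdne : c'.darts ≠ [] := by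
      intro h
      have := c'.length_darts
      rw [h] at this
      simp at this
      omega
    set D := c'.darts.getLast hdne with hD
    have hDsnd : D.snd = m := by rw [hD, c'.getLast_darts_eq_lastDart hdne]; rfl
    have hDmem : D ∈ c'.darts := List.getLast_mem hdne
    have hDfst_sup : D.fst ∈ c'.support := c'.dart_fst_mem_support_of_mem_darts hDmem
    have hDadj : (TG g).Adj m D.fst := by
      have := D.adj
      rw [hDsnd] at this
      exact this.symm
    have hDfst : step g m = D.fst := step_eq_of_adj hg (hsup _ hDfst_sup) hDadj
    -- the first and last edges coincide, contradicting edges_nodup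
    have hene : c'.edges ≠ [] := by
      intro h
      have := c'.length_edges
      rw [h] at this
      simp at this
      omega
    have hhead : c'.edges.head hene = s(m, x) := by
      have hE : c'.edges = s(m, x) :: q.edges := by rw [hq]; rfl
      simp [hE]
    have hlast : c'.edges.getLast hene = s(D.fst, m) := by
      have h1 : (c'.darts.map SimpleGraph.Dart.edge).getLast
          (by simpa using hdne) = SimpleGraph.Dart.edge (c'.darts.getLast hdne) := by
        rw [List.getLast_map]
      have h2 : c'.edges.getLast hene
          = (c'.darts.map SimpleGraph.Dart.edge).getLast (by simpa using hdne) := rfl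
      rw [h2, h1, ← hD]
      rw [show D.edge = s(D.fst, D.snd) from rfl, hDsnd]
    have h2le : 2 ≤ c'.edges.length := by
      rw [c'.length_edges]; omega
    have := head_ne_getLast_of_nodup hc'.isCircuit.isTrail.edges_nodup h2le hene
    rw [hhead, hlast, ← hDfst, ← hxd] at this
    exact this (Sym2.eq_swap)


lemma rk_eq_zero_iff {g : Fin n → Fin (n + 1)} (hg : Good g) {v : Fin (n + 1)} :
    rk hg v = 0 ↔ v = 0 := by
  constructor
  · intro h
    have := Nat.find_spec (hg v)
    rw [show rk hg v = Nat.find (hg v) from rfl] at h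
    rw [h] at this
    simpa using this
  · intro h; rw [h]; exact rk_zero hg

lemma exists_std_path {g : Fin n → Fin (n + 1)} (hg : Good g) (v : Fin (n + 1)) :
    ∃ p : (TG g).Walk v 0, p.IsPath ∧ (∀ x ∈ p.support, rk hg x ≤ rk hg v) ∧
      p.getVert 1 = step g v := by
  suffices H : ∀ N (v : Fin (n + 1)), rk hg v ≤ N → ∃ p : (TG g).Walk v 0, p.IsPath ∧
      (∀ x ∈ p.support, rk hg x ≤ rk hg v) ∧ p.getVert 1 = step g v by
    exact H (rk hg v) v le_rfl
  intro N
  induction N with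
  | zero =>
    intro v hv
    have hv0 : v = 0 := (rk_eq_zero_iff hg).mp (by omega)
    subst hv0
    exact ⟨SimpleGraph.Walk.nil, SimpleGraph.Walk.IsPath.nil, by simp, rfl⟩
  | succ N ih =>
    intro v hv
    by_cases hv0 : v = 0
    · subst hv0
      exact ⟨SimpleGraph.Walk.nil, SimpleGraph.Walk.IsPath.nil, by simp, rfl⟩
    · have hlt : rk hg (step g v) ≤ N := by
        have := rk_step_lt hg hv0; omega
      obtain ⟨q, hq, hqsup, hq1⟩ := ih (step g v) hlt
      refine ⟨SimpleGraph.Walk.cons (adj_step hg hv0) q, ?_, ?_, ?_⟩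
      · rw [SimpleGraph.Walk.cons_isPath_iff]
        refine ⟨hq, fun hmem => ?_⟩
        have h1 := hqsup v hmem
        have := rk_step_lt hg hv0
        omega
      · intro x hx
        rw [SimpleGraph.Walk.support_cons] at hx
        rcases List.mem_cons.mp hx with hx | hx
        · rw [hx]
        · have := hqsup x hx
          have := rk_step_lt hg hv0
          omega
      · rw [SimpleGraph.Walk.getVert_cons_succ, SimpleGraph.Walk.getVert_zero]

lemma path_getVert_one {g : Fin n → Fin (n + 1)} (hg : Good g) {v : Fin (n + 1)}
    (p : (TG g).Walk v 0) (hp : p.IsPath) : p.getVert 1 = step g v := by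
  obtain ⟨q, hq, -, hq1⟩ := exists_std_path hg v
  rw [((tree_of_good hg).existsUnique_path v 0).unique hp hq]
  exact hq1

section Par

variable (τ : SimpleGraph (Fin (n + 1))) (hτ : τ.IsTree)

/-- The unique path from `v` to `0` in a tree. -/
noncomputable def pathTo (v : Fin (n + 1)) : τ.Walk v 0 :=
  (hτ.existsUnique_path v 0).choose

lemma pathTo_isPath (v : Fin (n + 1)) : (pathTo τ hτ v).IsPath :=
  (hτ.existsUnique_path v 0).choose_spec.1

lemma pathTo_unique {v : Fin (n + 1)} (p : τ.Walk v 0) (hp : p.IsPath) :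
    p = pathTo τ hτ v :=
  (hτ.existsUnique_path v 0).choose_spec.2 p hp

/-- The parent of `v`: the second vertex on the unique path from `v` to `0`. -/
noncomputable def par (v : Fin (n + 1)) : Fin (n + 1) := (pathTo τ hτ v).getVert 1

lemma pathTo_not_nil {v : Fin (n + 1)} (hv : v ≠ 0) : ¬ (pathTo τ hτ v).Nil :=
  SimpleGraph.Walk.not_nil_of_ne hv

lemma par_adj {v : Fin (n + 1)} (hv : v ≠ 0) : τ.Adj v (par τ hτ v) :=
  SimpleGraph.Walk.adj_snd (pathTo_not_nil τ hτ hv)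

lemma pathTo_tail {v : Fin (n + 1)} (hv : v ≠ 0) :
    (pathTo τ hτ (par τ hτ v)) = (pathTo τ hτ v).tail := by
  symm
  apply pathTo_unique
  have h := SimpleGraph.Walk.cons_tail_eq (pathTo τ hτ v) (pathTo_not_nil τ hτ hv)
  have hp := pathTo_isPath τ hτ v
  rw [← h] at hp
  exact hp.of_cons

lemma par_len {v : Fin (n + 1)} (hv : v ≠ 0) :
    (pathTo τ hτ (par τ hτ v)).length + 1 = (pathTo τ hτ v).length := by
  rw [pathTo_tail τ hτ hv]
  exact SimpleGraph.Walk.length_tail_add_one (pathTo_not_nil τ hτ hv)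

lemma good_par : Good (fun i : Fin n => par τ hτ i.succ) := by
  set gp := fun i : Fin n => par τ hτ i.succ with hgp
  have hstep : ∀ v : Fin (n + 1), v ≠ 0 → step gp v = par τ hτ v := by
    intro v hv
    obtain ⟨i, rfl⟩ := Fin.exists_succ_eq_of_ne_zero hv
    rfl
  intro v
  suffices H : ∀ N (v : Fin (n + 1)), (pathTo τ hτ v).length ≤ N →
      ∃ k, (step gp)^[k] v = 0 by
    exact H _ v le_rfl
  intro N
  induction N with
  | zero =>
    intro v hlen
    have : (pathTo τ hτ v).Nil :=
      SimpleGraph.Walk.nil_iff_length_eq.mpr (by omega)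
    exact ⟨0, this.eq⟩
  | succ N ih =>
    intro v hlen
    by_cases hv : v = 0
    · exact ⟨0, hv⟩
    · have hlt := par_len τ hτ hv
      obtain ⟨k, hk⟩ := ih (par τ hτ v) (by omega)
      exact ⟨k + 1, by rw [Function.iterate_succ_apply, hstep v hv, hk]⟩

lemma par_eq_zero_of_adj {v : Fin (n + 1)} (hadj : τ.Adj v 0) : par τ hτ v = 0 := by
  have hp : (SimpleGraph.Walk.cons hadj SimpleGraph.Walk.nil).IsPath := by
    simp [SimpleGraph.Walk.cons_isPath_iff, hadj.ne]
  rw [par, ← pathTo_unique τ hτ _ hp]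
  rfl

lemma par_of_adj {u v : Fin (n + 1)} (hadj : τ.Adj u v) (hu : u ≠ 0) (hv : v ≠ 0) :
    par τ hτ u = v ∨ par τ hτ v = u := by
  classical
  set p := pathTo τ hτ u with hpdef
  set q := pathTo τ hτ v with hqdef
  by_cases huq : u ∈ q.support
  · -- par v = u
    right
    have hdrop : (q.dropUntil u huq).IsPath := (pathTo_isPath τ hτ v).dropUntil huq
    have hpeq : q.dropUntil u huq = p := pathTo_unique τ hτ _ hdrop
    have hvp : v ∉ p.support := by
      intro hvp
      rw [← hpeq] at hvp
      have hspec := q.take_spec huq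
      have hsup : q.support = (q.takeUntil u huq).support ++ (q.dropUntil u huq).support.tail := by
        rw [← SimpleGraph.Walk.support_append, hspec]
      have hnodup := (pathTo_isPath τ hτ v).support_nodup
      rw [hsup, List.nodup_append] at hnodup
      have hvtake : v ∈ (q.takeUntil u huq).support := (q.takeUntil u huq).start_mem_support
      have hvdrop : v ∈ (q.dropUntil u huq).support.tail := by
        have := (q.dropUntil u huq).support_eq_cons
        rw [this] at hvp
        rcases List.mem_cons.mp hvp with h | h
        · exact absurd h hadj.ne'
        · exact h
      exact hnodup.2.2 v hvtake v hvdrop rfl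
    have hp2 : (SimpleGraph.Walk.cons hadj.symm p).IsPath := by
      rw [SimpleGraph.Walk.cons_isPath_iff]
      exact ⟨pathTo_isPath τ hτ u, hvp⟩
    rw [par, ← pathTo_unique τ hτ _ hp2,
      SimpleGraph.Walk.getVert_cons_succ, SimpleGraph.Walk.getVert_zero]
  · -- par u = v
    left
    have hp2 : (SimpleGraph.Walk.cons hadj q).IsPath := by
      rw [SimpleGraph.Walk.cons_isPath_iff]
      exact ⟨pathTo_isPath τ hτ v, huq⟩
    rw [par, ← pathTo_unique τ hτ _ hp2,
      SimpleGraph.Walk.getVert_cons_succ, SimpleGraph.Walk.getVert_zero]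

lemma TG_par : TG (fun i : Fin n => par τ hτ i.succ) = τ := by
  set gp := fun i : Fin n => par τ hτ i.succ with hgp
  have hstep : ∀ v : Fin (n + 1), v ≠ 0 → step gp v = par τ hτ v := by
    intro v hv
    obtain ⟨i, rfl⟩ := Fin.exists_succ_eq_of_ne_zero hv
    rfl
  ext u v
  rw [TG_adj]
  constructor
  · rintro ⟨hne, h | h⟩
    · by_cases hu : u = 0
      · exfalso; rw [hu] at h hne; exact hne ((show step gp 0 = 0 from rfl) ▸ h)
      · rw [hstep u hu] at h
        rw [← h]
        exact par_adj τ hτ hu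
    · by_cases hv : v = 0
      · exfalso; rw [hv] at h hne; exact hne (((show step gp 0 = 0 from rfl) ▸ h).symm)
      · rw [hstep v hv] at h
        rw [← h]
        exact (par_adj τ hτ hv).symm
  · intro hadj
    refine ⟨hadj.ne, ?_⟩
    by_cases hu : u = 0
    · right
      have hv : v ≠ 0 := by rw [hu] at hadj; exact fun h => (h ▸ hadj).ne' rfl
      rw [hstep v hv, hu]
      exact par_eq_zero_of_adj τ hτ (hu ▸ hadj.symm)
    · by_cases hv : v = 0
      · left
        rw [hstep u hu, hv]
        exact par_eq_zero_of_adj τ hτ (hv ▸ hadj)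
      · rcases par_of_adj τ hτ hadj hu hv with h | h
        · left; rw [hstep u hu]; exact h
        · right; rw [hstep v hv]; exact h

end Par


lemma TG_inj {g₁ g₂ : Fin n → Fin (n + 1)} (hg1 : Good g₁) (hg2 : Good g₂)
    (h : TG g₁ = TG g₂) : g₁ = g₂ := by
  funext i
  have H : ∃ p : (TG g₁).Walk i.succ 0, p.IsPath ∧ p.getVert 1 = g₁ i := by
    obtain ⟨p, hp, -, h1⟩ := exists_std_path hg1 i.succ
    exact ⟨p, hp, by rw [h1]; rfl⟩
  rw [h] at H
  obtain ⟨p, hp, h1⟩ := H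
  have h2 := path_getVert_one hg2 p hp
  rw [h1] at h2
  exact h2

lemma prod_edges {g : Fin n → Fin (n + 1)} (hg : Good g)
    (w : Fin (n + 1) → Fin (n + 1) → ℝ) (hsymm : ∀ i j, w i j = w j i) :
    ∏ i : Fin n, w i.succ (g i) =
      ∏ p ∈ Finset.univ.filter
          (fun p : Fin (n + 1) × Fin (n + 1) => p.1 < p.2 ∧ (TG g).Adj p.1 p.2),
        w p.1 p.2 := by
  classical
  have hadjg : ∀ i : Fin n, (TG g).Adj i.succ (g i) := by
    intro i
    have := adj_step hg (Fin.succ_ne_zero i)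
    rwa [step_succ] at this
  apply Finset.prod_bij (fun (i : Fin n) _ =>
    if i.succ < g i then ((i.succ : Fin (n+1)), g i) else (g i, i.succ))
  · intro i _
    by_cases h : i.succ < g i
    · rw [if_pos h]
      simp only [Finset.mem_filter, Finset.mem_univ, true_and]
      exact ⟨h, hadjg i⟩
    · rw [if_neg h]
      simp only [Finset.mem_filter, Finset.mem_univ, true_and]
      have hne := good_ne hg i
      have hlt : g i < i.succ := by
        rcases lt_or_ge (g i) i.succ with h' | h'
        · exact h'
        · exact absurd (lt_of_le_of_ne h' (Ne.symm hne)) h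
      exact ⟨hlt, (hadjg i).symm⟩
  · intro a _ b _ hab
    have key : a.succ = b.succ ∨ (a.succ = g b ∧ g a = b.succ) := by
      by_cases ha : a.succ < g a <;> by_cases hb : b.succ < g b
      · rw [if_pos ha, if_pos hb] at hab
        exact Or.inl (congrArg Prod.fst hab)
      · rw [if_pos ha, if_neg hb] at hab
        exact Or.inr ⟨congrArg Prod.fst hab, congrArg Prod.snd hab⟩
      · rw [if_neg ha, if_pos hb] at hab
        exact Or.inr ⟨(congrArg Prod.snd hab), (congrArg Prod.fst hab)⟩
      · rw [if_neg ha, if_neg hb] at hab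
        exact Or.inl (congrArg Prod.snd hab)
    rcases key with h | ⟨h1, h2⟩
    · exact Fin.succ_injective _ h
    · exfalso
      have e1 : rk hg (g a) + 1 = rk hg a.succ := by
        have := rk_step hg (Fin.succ_ne_zero a); rwa [step_succ] at this
      have e2 : rk hg (g b) + 1 = rk hg b.succ := by
        have := rk_step hg (Fin.succ_ne_zero b); rwa [step_succ] at this
      rw [h2] at e1
      rw [← h1] at e2
      omega
  · rintro ⟨u, v⟩ hb
    simp only [Finset.mem_filter, Finset.mem_univ, true_and] at hb
    obtain ⟨hlt, hadj⟩ := hb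
    rw [TG_adj] at hadj
    obtain ⟨hne, h | h⟩ := hadj
    · have hu0 : u ≠ 0 := by
        intro h0
        rw [h0] at h
        have hv' : v = 0 := by simpa using h.symm
        exact hne (by rw [h0, hv'])
      obtain ⟨i, rfl⟩ := Fin.exists_succ_eq_of_ne_zero hu0
      refine ⟨i, Finset.mem_univ i, ?_⟩
      rw [step_succ] at h
      rw [if_pos (h ▸ hlt)]
      rw [h]
    · have hv0 : v ≠ 0 := by
        intro h0
        rw [h0] at hlt
        exact Fin.not_lt_zero u hlt
      obtain ⟨i, rfl⟩ := Fin.exists_succ_eq_of_ne_zero hv0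
      refine ⟨i, Finset.mem_univ i, ?_⟩
      rw [step_succ] at h
      have : ¬ i.succ < g i := by rw [h]; omega
      rw [if_neg this, h]
  · intro i _
    by_cases h : i.succ < g i
    · rw [if_pos h]
    · rw [if_neg h]
      exact hsymm _ _

end WMT

/-- weighted Matrix-Tree theorem, Laplacian form: for symmetric
nonnegative edge weights `w` on the vertex set `{0,…,n}` with weighted Laplacian
`Λ_{ij} = -w_{ij}` (`i ≠ j`), `Λ_{ii} = Σ_{k ≠ i} w_{ik}`, the principal minor
`det(M_{11}(Λ))` equals the sum over all trees `τ` of the product of the weights of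
the edges of `τ`. -/
theorem weighted_matrix_tree {n : ℕ} (w : Fin (n + 1) → Fin (n + 1) → ℝ)
    (hsymm : ∀ i j, w i j = w j i) (hnonneg : ∀ i j, 0 ≤ w i j)
    (Λ : Matrix (Fin (n + 1)) (Fin (n + 1)) ℝ)
    (hΛ : ∀ i j, Λ i j =
      if i = j then ∑ k ∈ Finset.univ.filter (fun k => k ≠ i), w i k else -w i j) :
    (Λ.submatrix (Fin.succAbove 0) (Fin.succAbove 0)).det =
      ∑ τ ∈ Finset.univ.filter (fun τ : SimpleGraph (Fin (n + 1)) => τ.IsTree),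
        ∏ p ∈ Finset.univ.filter
            (fun p : Fin (n + 1) × Fin (n + 1) => p.1 < p.2 ∧ τ.Adj p.1 p.2),
          w p.1 p.2 := by
  rw [WMT.det_expand w Λ hΛ]
  rw [← Finset.sum_filter_add_sum_filter_not
    (Fintype.piFinset (fun i : Fin n => Finset.univ.filter (fun k => k ≠ i.succ)))
    WMT.Good]
  have hbad : ∑ g ∈ (Fintype.piFinset
        (fun i : Fin n => Finset.univ.filter (fun k => k ≠ i.succ))).filter
        (fun g => ¬ WMT.Good g),
      (∏ i, w i.succ (g i)) * (WMT.RMat g).det = 0 := by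
    apply Finset.sum_eq_zero
    intro g hgmem
    rw [Finset.mem_filter] at hgmem
    rw [WMT.det_RMat_bad hgmem.2, mul_zero]
  rw [hbad, add_zero]
  have hgood : ∀ g ∈ (Fintype.piFinset
        (fun i : Fin n => Finset.univ.filter (fun k => k ≠ i.succ))).filter WMT.Good,
      (∏ i, w i.succ (g i)) * (WMT.RMat g).det = ∏ i, w i.succ (g i) := by
    intro g hgmem
    rw [Finset.mem_filter] at hgmem
    rw [WMT.det_RMat_good hgmem.2, mul_one]
  rw [Finset.sum_congr rfl hgood]
  apply Finset.sum_bij (fun g _ => WMT.TG g)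
  · intro g hgmem
    rw [Finset.mem_filter] at hgmem ⊢
    exact ⟨Finset.mem_univ _, WMT.tree_of_good hgmem.2⟩
  · intro g1 h1 g2 h2 heq
    rw [Finset.mem_filter] at h1 h2
    exact WMT.TG_inj h1.2 h2.2 heq
  · intro τ hτmem
    rw [Finset.mem_filter] at hτmem
    have hτ := hτmem.2
    refine ⟨fun i => WMT.par τ hτ i.succ, ?_, (WMT.TG_par τ hτ)⟩
    rw [Finset.mem_filter]
    constructor
    · rw [Fintype.mem_piFinset]
      intro i
      simp only [Finset.mem_filter, Finset.mem_univ, true_and]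
      exact (WMT.par_adj τ hτ (Fin.succ_ne_zero i)).ne'
    · exact WMT.good_par τ hτ
  · intro g hgmem
    rw [Finset.mem_filter] at hgmem
    exact WMT.prod_edges hgmem.2 w hsymm
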